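/- Fix a nonnegative integer n and reals α > 2, c > 0. Define p(D) = ∫_0^D γ(n+1, c x^α)·(2x/D²) dx / Γ(n+1). Then p(D)/D^{α(n+1)} → 2c^{n+1}/(Γ(n+2)·(α(n+1)+2)) as D → 0⁺, i.e., p(D) = Θ(D^{α(n+1)}) as D → 0. -/

import Mathlib

open Filter Topology

noncomputable def lowerGamma (a x : ℝ) : ℝ := ∫ s in (0:ℝ)..x, s ^ (a - 1) * Real.exp (-s)

lemma lg_eq (n : ℕ) (x : ℝ) :
    lowerGamma (n + 1) x = ∫ s in (0:ℝ)..x, s ^ n * Real.exp (-s) := by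
  unfold lowerGamma
  norm_num [Real.rpow_natCast]

lemma lg_hasDerivAt (n : ℕ) (x : ℝ) :
    HasDerivAt (lowerGamma (n + 1)) (x ^ n * Real.exp (-x)) x := by
  have hcont : Continuous (fun s : ℝ => s ^ n * Real.exp (-s)) := by continuity
  have := (hcont.integral_hasStrictDerivAt 0 x).hasDerivAt
  refine HasDerivAt.congr_of_eventuallyEq this ?_
  filter_upwards with y
  exact (lg_eq n y)

lemma lg_cont (n : ℕ) : Continuous (lowerGamma (n + 1)) :=
  continuous_iff_continuousAt.mpr fun x => (lg_hasDerivAt n x).continuousAt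

lemma lg_zero (n : ℕ) : lowerGamma (n + 1) 0 = 0 := by
  rw [lg_eq]; simp

lemma lg_lim (n : ℕ) :
    Tendsto (fun t : ℝ => lowerGamma (n + 1) t / t ^ (n + 1)) (𝓝[>] 0)
      (𝓝 (1 / (n + 1))) := by
  apply HasDerivAt.lhopital_zero_nhdsGT
    (f' := fun t : ℝ => t ^ n * Real.exp (-t)) (g' := fun t : ℝ => (n + 1 : ℝ) * t ^ n)
  · filter_upwards with t using lg_hasDerivAt n t
  · filter_upwards with t
    have := hasDerivAt_pow (n + 1) t
    simpa using this
  · filter_upwards [self_mem_nhdsWithin] with t (ht : 0 < t)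
    positivity
  · have : Tendsto (lowerGamma (n + 1)) (𝓝 0) (𝓝 0) := by
      have := (lg_cont n).tendsto 0
      rwa [lg_zero n] at this
    exact this.mono_left nhdsWithin_le_nhds
  · have : Tendsto (fun t : ℝ => t ^ (n + 1)) (𝓝 0) (𝓝 0) := by
      have := (continuous_pow (n + 1) (M := ℝ)).tendsto 0
      simpa using this
    exact this.mono_left nhdsWithin_le_nhds
  · have h1 : Tendsto (fun t : ℝ => Real.exp (-t) / (n + 1)) (𝓝[>] 0)
        (𝓝 (1 / (n + 1))) := by
      have : Tendsto (fun t : ℝ => Real.exp (-t) / (n + 1)) (𝓝 0) (𝓝 (1 / (n + 1))) := by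
        have := ((Real.continuous_exp.comp continuous_neg).div_const ((n:ℝ)+1)).tendsto 0
        simpa [one_div] using this
      exact this.mono_left nhdsWithin_le_nhds
    refine h1.congr' ?_
    filter_upwards [self_mem_nhdsWithin] with t (ht : 0 < t)
    have htn : t ^ n ≠ 0 := by positivity
    field_simp

theorem stmt14 (n : ℕ) (α c : ℝ) (hα : 2 < α) (hc : 0 < c) :
    Tendsto
      (fun D : ℝ =>
        ((∫ x in (0:ℝ)..D, lowerGamma (n + 1) (c * x ^ α) * (2 * x / D ^ 2)) /
          Real.Gamma (n + 1)) / D ^ (α * (n + 1)))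
      (nhdsWithin 0 (Set.Ioi 0))
      (nhds (2 * c ^ (n + 1) / (Real.Gamma (n + 2) * (α * (n + 1) + 2)))) := by
  have hα0 : (0:ℝ) < α := by linarith
  have hn1 : (0:ℝ) < (n:ℝ) + 1 := by positivity
  set A : ℝ := α * ((n:ℝ) + 1) + 2 with hA
  have hApos : 0 < A := by positivity
  have hrpow : Continuous (fun x : ℝ => x ^ α) := Real.continuous_rpow_const hα0.le
  have hh : Continuous (fun x : ℝ => lowerGamma ((n:ℝ)+1) (c * x ^ α) * (2 * x)) :=
    ((lg_cont n).comp (continuous_const.mul hrpow)).mul (continuous_const.mul continuous_id)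
  set F : ℝ → ℝ := fun D => ∫ x in (0:ℝ)..D, lowerGamma ((n:ℝ)+1) (c * x ^ α) * (2 * x)
    with hF
  have hGamma : 0 < Real.Gamma ((n:ℝ) + 1) := Real.Gamma_pos_of_pos hn1
  have key : Tendsto (fun D => F D / D ^ A) (𝓝[>] (0:ℝ))
      (𝓝 (2 * c ^ (n+1) / (((n:ℝ)+1) * A))) := by
    apply HasDerivAt.lhopital_zero_nhdsGT
      (f' := fun D => lowerGamma ((n:ℝ)+1) (c * D ^ α) * (2 * D))
      (g' := fun D => A * D ^ (A - 1))
    · filter_upwards with D using (hh.integral_hasStrictDerivAt 0 D).hasDerivAt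
    · filter_upwards [self_mem_nhdsWithin] with D (hD : 0 < D)
      exact Real.hasDerivAt_rpow_const (Or.inl hD.ne')
    · filter_upwards [self_mem_nhdsWithin] with D (hD : 0 < D)
      have := Real.rpow_pos_of_pos hD (A - 1)
      positivity
    · have hFc : Tendsto F (𝓝 0) (𝓝 (F 0)) :=
        ((hh.integral_hasStrictDerivAt 0 0).hasDerivAt.continuousAt).tendsto
      have hF0 : F 0 = 0 := intervalIntegral.integral_same
      rw [hF0] at hFc
      exact hFc.mono_left nhdsWithin_le_nhds
    · have : Tendsto (fun D : ℝ => D ^ A) (𝓝 0) (𝓝 ((0:ℝ) ^ A)) :=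
        (Real.continuousAt_rpow_const 0 A (Or.inr hApos.le)).tendsto
      rw [Real.zero_rpow hApos.ne'] at this
      exact this.mono_left nhdsWithin_le_nhds
    · have hcomp : Tendsto (fun D : ℝ => c * D ^ α) (𝓝[>] (0:ℝ)) (𝓝[>] (0:ℝ)) := by
        apply tendsto_nhdsWithin_of_tendsto_nhds_of_eventually_within
        · have : Tendsto (fun D : ℝ => c * D ^ α) (𝓝 0) (𝓝 (c * (0:ℝ) ^ α)) :=
            (continuous_const.mul hrpow).tendsto 0
          rw [Real.zero_rpow hα0.ne', mul_zero] at this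
          exact this.mono_left nhdsWithin_le_nhds
        · filter_upwards [self_mem_nhdsWithin] with D (hD : 0 < D)
          exact mul_pos hc (Real.rpow_pos_of_pos hD α)
      have hmain := ((lg_lim n).comp hcomp).mul_const (2 * c ^ (n+1) / A)
      have hval : 1 / ((n:ℝ) + 1) * (2 * c ^ (n+1) / A)
          = 2 * c ^ (n+1) / (((n:ℝ)+1) * A) := by
        field_simp
      rw [hval] at hmain
      refine hmain.congr' ?_
      filter_upwards [self_mem_nhdsWithin] with D (hD : 0 < D)
      have hP : (0:ℝ) < D ^ (α * ((n:ℝ)+1)) := Real.rpow_pos_of_pos hD _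
      have ht : (c * D ^ α) ^ (n + 1) = c ^ (n+1) * D ^ (α * ((n:ℝ)+1)) := by
        rw [mul_pow, ← Real.rpow_natCast (D ^ α) (n+1), ← Real.rpow_mul hD.le]
        push_cast
        ring_nf
      have hDA : D ^ (A - 1) = D ^ (α * ((n:ℝ)+1)) * D := by
        rw [hA]
        rw [show α * ((n:ℝ)+1) + 2 - 1 = α * ((n:ℝ)+1) + 1 by ring,
          Real.rpow_add hD, Real.rpow_one]
      show lowerGamma ((n:ℝ)+1) (c * D ^ α) / (c * D ^ α) ^ (n+1) * (2 * c ^ (n+1) / A)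
          = lowerGamma ((n:ℝ)+1) (c * D ^ α) * (2 * D) / (A * D ^ (A - 1))
      rw [ht, hDA]
      have hcn : (0:ℝ) < c ^ (n+1) := by positivity
      field_simp
  have hfinal := key.div_const (Real.Gamma ((n:ℝ) + 1))
  have hconst : 2 * c ^ (n+1) / (((n:ℝ)+1) * A) / Real.Gamma ((n:ℝ) + 1)
      = 2 * c ^ (n + 1) / (Real.Gamma ((n:ℝ) + 2) * A) := by
    have h2 : ((n:ℝ) + 2) = ((n:ℝ) + 1) + 1 := by ring
    rw [h2, Real.Gamma_add_one hn1.ne']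
    field_simp
  rw [hconst] at hfinal
  refine hfinal.congr' ?_
  filter_upwards [self_mem_nhdsWithin] with D (hD : 0 < D)
  have hP : (0:ℝ) < D ^ (α * ((n:ℝ)+1)) := Real.rpow_pos_of_pos hD _
  have hDA : D ^ A = D ^ (α * ((n:ℝ)+1)) * D ^ 2 := by
    rw [hA, Real.rpow_add hD, show (2:ℝ) = ((2:ℕ):ℝ) by norm_num, Real.rpow_natCast]
  have hint : (∫ x in (0:ℝ)..D, lowerGamma ((n:ℝ) + 1) (c * x ^ α) * (2 * x / D ^ 2))
      = F D / D ^ 2 := by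
    rw [hF, ← intervalIntegral.integral_div]
    congr 1 with x
    ring
  show F D / D ^ A / Real.Gamma ((n:ℝ)+1)
      = (∫ x in (0:ℝ)..D, lowerGamma ((n:ℝ) + 1) (c * x ^ α) * (2 * x / D ^ 2)) /
        Real.Gamma ((n:ℝ)+1) / D ^ (α * ((n:ℝ)+1))
  rw [hint, hDA]
  have hD2 : (0:ℝ) < D ^ 2 := by positivity
  field_simp
  try ring
  try exact Or.inl trivial
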